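/- Let n ≥ 2 and ℓ ≥ 1 be fixed integers and let 𝓕 be any set of degree-n fields. Suppose there exist a real number α ≥ 1, a strictly increasing unbounded sequence of real exponents k_1 < k_2 < ⋯ (k_j → ∞), and for each j a finite constant c_j > 0, such that for all real X ≥ 1 one has ∑_{K ∈ 𝓕(X)} |Cl_K[ℓ]|^{k_j} ≤ c_j · |𝓕(X)|^α. Then for every ε > 0 there exists a constant c_ε > 0 (depending on ε, n, ℓ, α and the family 𝓕) such that every field K ∈ 𝓕 satisfies |Cl_K[ℓ]| ≤ c_ε · D_K^ε. -/

import Mathlib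

open NumberField Filter

-- The absolute value of the discriminant of an intermediate field `K` of `ℚ̄/ℚ`
-- (junk value `0` in the irrelevant case that `K/ℚ` is infinite-dimensional).
open scoped Classical in
noncomputable def absDisc (K : IntermediateField ℚ (AlgebraicClosure ℚ)) : ℕ :=
  if h : FiniteDimensional ℚ K then
    letI : NumberField K := { to_charZero := inferInstance, to_finiteDimensional := h }
    (NumberField.discr K).natAbs
  else 0

/-- The cardinality `|Cl_K[m]|` of the `m`-torsion subgroup of the class group of `K`. -/
noncomputable def clTors (K : IntermediateField ℚ (AlgebraicClosure ℚ)) (m : ℕ) : ℕ :=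
  Nat.card {x : ClassGroup (𝓞 K) // x ^ m = 1}

open NumberField Polynomial Module NumberField.InfinitePlace NumberField.mixedEmbedding
open scoped IntermediateField

lemma absDisc_eq (K : IntermediateField ℚ (AlgebraicClosure ℚ)) (h : FiniteDimensional ℚ K) :
    haveI : NumberField K := { to_charZero := inferInstance, to_finiteDimensional := h }
    absDisc K = (NumberField.discr K).natAbs := by
  rw [absDisc, dif_pos h]

lemma one_le_absDisc (K : IntermediateField ℚ (AlgebraicClosure ℚ))
    (h : FiniteDimensional ℚ K) : 1 ≤ absDisc K := by
  haveI : NumberField K := { to_charZero := inferInstance, to_finiteDimensional := h }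
  rw [absDisc_eq K h]
  have := NumberField.discr_ne_zero K
  omega

lemma one_le_clTors (K : IntermediateField ℚ (AlgebraicClosure ℚ))
    (h : FiniteDimensional ℚ K) (m : ℕ) : 1 ≤ clTors K m := by
  haveI : NumberField K := { to_charZero := inferInstance, to_finiteDimensional := h }
  have : Nonempty {x : ClassGroup (𝓞 K) // x ^ m = 1} := ⟨1, one_pow m⟩
  exact Nat.card_pos


noncomputable abbrev Qbar := AlgebraicClosure ℚ

/-- Bound on the coefficients of the minimal polynomial of a generator. -/
noncomputable def coefBd (n N : ℕ) : ℤ :=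
  ⌈((NumberField.hermiteTheorem.boundOfDiscBdd N : ℝ) + 1) ^ n * (n.choose (n / 2) : ℝ)⌉

lemma exists_gen_aux (n N : ℕ) (K : IntermediateField ℚ Qbar)
    (hfd : FiniteDimensional ℚ K) (hrank : finrank ℚ K = n) (a : 𝓞 K)
    (h₁ : ℚ⟮(a : K)⟯ = ⊤)
    (h₂ : ∀ φ : K →+* ℂ, ‖φ (a : K)‖ ≤ (NumberField.hermiteTheorem.boundOfDiscBdd N : ℝ) + 1) :
    ∃ x : Qbar, K = ℚ⟮x⟯ ∧ ∃ p : Polynomial ℤ, p.natDegree ≤ n ∧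
      (∀ i, |p.coeff i| ≤ coefBd n N) ∧ p ≠ 0 ∧ aeval x p = 0 := by
  haveI : NumberField K := { to_charZero := inferInstance, to_finiteDimensional := hfd }
  set B : ℝ := (NumberField.hermiteTheorem.boundOfDiscBdd N : ℝ) with hB
  have hB0 : 0 ≤ B := (NumberField.hermiteTheorem.boundOfDiscBdd N).2
  have hx : IsIntegral ℤ (a : K) := a.isIntegral_coe
  have hdeg : (minpoly ℤ (a : K)).natDegree = n := by
    have h₁' := h₁
    rw [Field.primitive_element_iff_minpoly_natDegree_eq,
      minpoly.isIntegrallyClosed_eq_field_fractions' ℚ hx,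
      (minpoly.monic hx).natDegree_map] at h₁'
    rw [h₁', hrank]
  refine ⟨((a : K) : Qbar), ?_, minpoly ℤ (a : K), hdeg.le, fun i => ?_,
    minpoly.ne_zero hx, ?_⟩
  · have h : (IntermediateField.lift (F := K) ⊤) = IntermediateField.lift (F := K) ℚ⟮(a:K)⟯ := by
      congr 1; convert h₁.symm; rfl
    rw [IntermediateField.lift_top, IntermediateField.lift_adjoin, Set.image_singleton] at h
    exact h
  · have hcoef := NumberField.Embeddings.coeff_bdd_of_norm_le h₂ i
    have hmax : (B + 1) ⊔ 1 = B + 1 := max_eq_left (by linarith)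
    rw [hrank, hmax] at hcoef
    have heq : ‖(minpoly ℚ (a : K)).coeff i‖ = |((minpoly ℤ (a : K)).coeff i : ℝ)| := by
      rw [minpoly.isIntegrallyClosed_eq_field_fractions' ℚ hx, coeff_map, eq_intCast,
        Int.norm_cast_rat, Int.norm_eq_abs]
    rw [heq] at hcoef
    rw [← @Int.cast_le ℝ, Int.cast_abs]
    exact hcoef.trans (Int.le_ceil _)
  · exact (aeval_algebraMap_eq_zero_iff Qbar ((a : K)) _).mpr (minpoly.aeval ℤ (a : K))

lemma exists_gen (n N : ℕ) (K : IntermediateField ℚ Qbar)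
    (hfd : FiniteDimensional ℚ K) (hrank : finrank ℚ K = n)
    (hd : absDisc K ≤ N) :
    ∃ x : Qbar, K = ℚ⟮x⟯ ∧ ∃ p : Polynomial ℤ, p.natDegree ≤ n ∧
      (∀ i, |p.coeff i| ≤ coefBd n N) ∧ p ≠ 0 ∧ aeval x p = 0 := by
  haveI : NumberField K := { to_charZero := inferInstance, to_finiteDimensional := hfd }
  set B := NumberField.hermiteTheorem.boundOfDiscBdd N with hBdef
  have hd' : |NumberField.discr K| ≤ (N : ℤ) := by
    rw [absDisc_eq K hfd] at hd
    rw [Int.abs_eq_natAbs]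
    exact_mod_cast hd
  have hmk := NumberField.hermiteTheorem.minkowskiBound_lt_boundOfDiscBdd hd'
  obtain ⟨w₀⟩ := (inferInstance : Nonempty (InfinitePlace K))
  have hB0 : (0 : ℝ) ≤ (B : ℝ) := B.2
  by_cases hw₀ : IsReal w₀
  · have hlt : minkowskiBound K ↑1 < (convexBodyLTFactor K) * B := by
      calc
        minkowskiBound K 1 < B := hmk
        _ = 1 * B := by rw [one_mul]
        _ ≤ convexBodyLTFactor K * B := by gcongr; exact_mod_cast one_le_convexBodyLTFactor K
    obtain ⟨a, ha₁, ha₂⟩ := exists_primitive_element_lt_of_isReal K hw₀ hlt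
    refine exists_gen_aux n N K hfd hrank a ha₁ ?_
    refine (le_iff_le (a : K) _).mp (fun w => (ha₂ w).le.trans ?_)
    rw [NNReal.coe_max]
    refine max_le (by linarith) ?_
    rw [NNReal.coe_one]
    have := (NumberField.hermiteTheorem.boundOfDiscBdd N).2
    linarith
  · replace hw₀ : IsComplex w₀ := not_isReal_iff_isComplex.mp hw₀
    have hlt : minkowskiBound K ↑1 < (convexBodyLT'Factor K) * B := by
      calc
        minkowskiBound K 1 < B := hmk
        _ = 1 * B := by rw [one_mul]
        _ ≤ convexBodyLT'Factor K * B := by gcongr; exact_mod_cast one_le_convexBodyLT'Factor K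
    obtain ⟨a, ha₁, ha₂⟩ := exists_primitive_element_lt_of_isComplex K hw₀ hlt
    refine exists_gen_aux n N K hfd hrank a ha₁ ?_
    refine (le_iff_le (a : K) _).mp (fun w => (ha₂ w).le.trans ?_)
    have h1 : Real.sqrt (1 + (B : ℝ) ^ 2) ≤ Real.sqrt (((B : ℝ) + 1) ^ 2) :=
      Real.sqrt_le_sqrt (by nlinarith)
    rwa [Real.sqrt_sq (by linarith)] at h1

open scoped Classical in
noncomputable def polyT (n N : ℕ) : Finset (Polynomial ℤ) :=
  (Fintype.piFinset (fun _ : Fin (n + 1) => Finset.Icc (-(coefBd n N)) (coefBd n N))).image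
    (fun c => ∑ i : Fin (n + 1), Polynomial.C (c i) * Polynomial.X ^ (i : ℕ))

open scoped Classical in
noncomputable def rootT (n N : ℕ) : Finset Qbar :=
  (polyT n N).biUnion (fun p => (p.map (algebraMap ℤ Qbar)).roots.toFinset)

lemma mem_polyT {n N : ℕ} {p : Polynomial ℤ} (hdeg : p.natDegree ≤ n)
    (hc : ∀ i, |p.coeff i| ≤ coefBd n N) : p ∈ polyT n N := by
  classical
  refine Finset.mem_image.mpr ⟨fun i => p.coeff i, ?_, ?_⟩
  · rw [Fintype.mem_piFinset]
    intro i
    rw [Finset.mem_Icc, ← abs_le]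
    exact hc i
  · have := (Polynomial.as_sum_range' p (n + 1) (Nat.lt_succ_of_le hdeg)).symm
    rw [← Fin.sum_univ_eq_sum_range (fun i => Polynomial.monomial i (p.coeff i)) (n + 1)] at this
    simpa only [Polynomial.C_mul_X_pow_eq_monomial] using this

lemma natDegree_le_of_mem_polyT {n N : ℕ} {p : Polynomial ℤ} (hp : p ∈ polyT n N) :
    p.natDegree ≤ n := by
  classical
  obtain ⟨c, -, rfl⟩ := Finset.mem_image.mp hp
  refine Polynomial.natDegree_sum_le_of_forall_le _ _ (fun i _ => ?_)
  exact (Polynomial.natDegree_C_mul_X_pow_le (c i) (i : ℕ)).trans (Nat.lt_succ_iff.mp i.2)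

lemma card_rootT_le (n N : ℕ) : (rootT n N).card ≤ (polyT n N).card * n := by
  classical
  refine (Finset.card_biUnion_le).trans ?_
  have h : ∀ p ∈ polyT n N, ((p.map (algebraMap ℤ Qbar)).roots.toFinset).card ≤ n := by
    intro p hp
    refine (Multiset.toFinset_card_le _).trans ?_
    refine (Polynomial.card_roots' _).trans ?_
    exact (Polynomial.natDegree_map_le).trans (natDegree_le_of_mem_polyT hp)
  calc ∑ p ∈ polyT n N, ((p.map (algebraMap ℤ Qbar)).roots.toFinset).card
      ≤ ∑ _p ∈ polyT n N, n := Finset.sum_le_sum h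
    _ = (polyT n N).card * n := by rw [Finset.sum_const, smul_eq_mul]

lemma mem_rootT {n N : ℕ} {p : Polynomial ℤ} {x : Qbar} (hp : p ∈ polyT n N) (hp0 : p ≠ 0)
    (hx : aeval x p = 0) : x ∈ rootT n N := by
  classical
  refine Finset.mem_biUnion.mpr ⟨p, hp, Multiset.mem_toFinset.mpr ?_⟩
  rw [Polynomial.mem_roots']
  refine ⟨(Polynomial.map_ne_zero_iff (algebraMap ℤ Qbar).injective_int).mpr hp0, ?_⟩
  rwa [Polynomial.IsRoot, Polynomial.eval_map, ← Polynomial.aeval_def]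

lemma count_le (n N : ℕ) (hn : 2 ≤ n) (𝓕 : Set (IntermediateField ℚ Qbar))
    (h𝓕 : ∀ K ∈ 𝓕, finrank ℚ K = n) :
    {K ∈ 𝓕 | absDisc K ≤ N}.Finite ∧ {K ∈ 𝓕 | absDisc K ≤ N}.ncard ≤ (rootT n N).card := by
  classical
  set S := {K ∈ 𝓕 | absDisc K ≤ N} with hS
  have hgen : ∀ K ∈ S, ∃ x : Qbar, x ∈ rootT n N ∧ K = ℚ⟮x⟯ := by
    intro K hK
    have hfd : FiniteDimensional ℚ K :=
      FiniteDimensional.of_finrank_pos (by rw [h𝓕 K hK.1]; omega)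
    obtain ⟨x, hKx, p, hdeg, hcoef, hp0, hroot⟩ := exists_gen n N K hfd (h𝓕 K hK.1) hK.2
    exact ⟨x, mem_rootT (mem_polyT hdeg hcoef) hp0 hroot, hKx⟩
  set f : IntermediateField ℚ Qbar → Qbar := fun K =>
    if h : ∃ x : Qbar, x ∈ rootT n N ∧ K = ℚ⟮x⟯ then h.choose else 0 with hfdef
  have hf : ∀ K ∈ S, f K ∈ (rootT n N : Finset Qbar) ∧ K = ℚ⟮f K⟯ := by
    intro K hK
    have h := hgen K hK
    simp only [hfdef, dif_pos h]
    exact ⟨h.choose_spec.1, h.choose_spec.2⟩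
  have hinj : Set.InjOn f S := fun K hK K' hK' he => by rw [(hf K hK).2, (hf K' hK').2, he]
  have hsub : f '' S ⊆ ↑(rootT n N) := by rintro _ ⟨K, hK, rfl⟩; exact (hf K hK).1
  have hfin : S.Finite := Set.Finite.of_finite_image ((rootT n N).finite_toSet.subset hsub) hinj
  refine ⟨hfin, ?_⟩
  have h2 := Set.ncard_le_ncard_of_injOn (t := ↑(rootT n N)) f (fun K hK => (hf K hK).1) hinj (rootT n N).finite_toSet
  rwa [Set.ncard_coe_finset] at h2

lemma boundOfDiscBdd_le (N : ℕ) (hN : 1 ≤ N) :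
    ((NumberField.hermiteTheorem.boundOfDiscBdd N : NNReal) : ℝ) ≤ 6 * (N : ℝ) ^ 2 := by
  have hN1 : (1 : ℝ) ≤ (N : ℝ) := by exact_mod_cast hN
  have hπ : (2 : ℝ) ≤ 3 * Real.pi / 4 := by nlinarith [Real.pi_gt_three]
  have hcoe : ((NumberField.hermiteTheorem.boundOfDiscBdd N : NNReal) : ℝ) =
      Real.sqrt N * 2 ^ (NumberField.hermiteTheorem.rankOfDiscrBdd N) + 1 := by
    rw [NumberField.hermiteTheorem.boundOfDiscBdd]
    push_cast [Real.coe_sqrt]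
    norm_num
  set r := NumberField.hermiteTheorem.rankOfDiscrBdd N with hrdef
  set v : ℝ := Real.log (9 / 4 * N) / Real.log (3 * Real.pi / 4) with hvdef
  have hlogpos : 0 < Real.log (3 * Real.pi / 4) := Real.log_pos (by linarith)
  have hvnn : 0 ≤ v := div_nonneg (Real.log_nonneg (by nlinarith)) hlogpos.le
  have h2r : (2 : ℝ) ^ r ≤ 5 * (N : ℝ) := by
    have hrle : r = max 1 (Nat.floor v) := by rw [hrdef]
    rcases le_or_gt (Nat.floor v) 1 with h | h
    · have : r = 1 := by rw [hrle, max_eq_left h]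
      rw [this, pow_one]; linarith
    · have hre : r = Nat.floor v := by rw [hrle, max_eq_right h.le]
      have hrv : (r : ℝ) ≤ v := by rw [hre]; exact Nat.floor_le hvnn
      have k1 : (2 : ℝ) ^ r = Real.exp ((r : ℝ) * Real.log 2) := by
        rw [← Real.rpow_natCast 2 r, Real.rpow_def_of_pos (by norm_num), mul_comm]
      have k2 : (r : ℝ) * Real.log 2 ≤ v * Real.log (3 * Real.pi / 4) := by
        refine mul_le_mul hrv (Real.log_le_log (by norm_num) hπ) (Real.log_nonneg (by norm_num))
          hvnn
      have k3 : v * Real.log (3 * Real.pi / 4) = Real.log (9 / 4 * N) := by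
        rw [hvdef, div_mul_cancel₀ _ hlogpos.ne']
      have k4 : Real.exp (Real.log (9 / 4 * N)) = 9 / 4 * N :=
        Real.exp_log (by positivity)
      calc (2 : ℝ) ^ r = Real.exp ((r : ℝ) * Real.log 2) := k1
        _ ≤ Real.exp (Real.log (9 / 4 * N)) := by rw [← k3]; exact Real.exp_le_exp.mpr k2
        _ = 9 / 4 * N := k4
        _ ≤ 5 * N := by linarith
  have hsq : Real.sqrt N ≤ (N : ℝ) := by
    have h := Real.sqrt_le_sqrt (show (N : ℝ) ≤ (N : ℝ) ^ 2 by nlinarith)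
    rwa [Real.sqrt_sq (by linarith : (0:ℝ) ≤ (N : ℝ))] at h
  rw [hcoe]
  have h2rpos : (0 : ℝ) ≤ 2 ^ r := by positivity
  have := mul_le_mul hsq h2r h2rpos (by linarith : (0:ℝ) ≤ (N:ℝ))
  nlinarith [Real.sqrt_nonneg (N : ℝ)]

lemma card_polyT_le (n N : ℕ) :
    (polyT n N).card ≤ (Finset.Icc (-(coefBd n N)) (coefBd n N)).card ^ (n + 1) := by
  classical
  refine Finset.card_image_le.trans ?_
  rw [Fintype.card_piFinset]
  simp [Finset.prod_const]

lemma one_le_coefBd (n N : ℕ) : 1 ≤ coefBd n N := by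
  have hch : (1 : ℝ) ≤ (n.choose (n / 2) : ℝ) := by
    exact_mod_cast Nat.succ_le_of_lt (Nat.choose_pos (Nat.div_le_self n 2))
  have hB : (0 : ℝ) ≤ ((NumberField.hermiteTheorem.boundOfDiscBdd N : NNReal) : ℝ) :=
    (NumberField.hermiteTheorem.boundOfDiscBdd N).2
  have h1 : (1 : ℝ) ≤ ((NumberField.hermiteTheorem.boundOfDiscBdd N : NNReal) : ℝ) + 1 := by
    linarith
  refine Int.one_le_ceil_iff.mpr ?_
  nlinarith [one_le_pow₀ h1 (n := n)]

lemma count_poly_bound (n : ℕ) (hn : 2 ≤ n) (𝓕 : Set (IntermediateField ℚ Qbar))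
    (h𝓕 : ∀ K ∈ 𝓕, finrank ℚ K = n) :
    ∃ Cc : ℝ, 1 ≤ Cc ∧ ∀ X : ℝ, 1 ≤ X →
      {K ∈ 𝓕 | (absDisc K : ℝ) ≤ X}.Finite ∧
      (({K ∈ 𝓕 | (absDisc K : ℝ) ≤ X}).ncard : ℝ) ≤ Cc * X ^ (2 * n * (n + 1)) := by
  set ch : ℝ := (n.choose (n / 2) : ℝ) with hch
  have hch1 : (1 : ℝ) ≤ ch := by
    rw [hch, Nat.one_le_cast]
    exact Nat.one_le_iff_ne_zero.mpr (Nat.choose_pos (Nat.div_le_self n 2)).ne'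
  set c₁ : ℝ := 3 * ((28 : ℝ) ^ n * ch + 1) with hc₁
  have hc₁1 : (1 : ℝ) ≤ c₁ := by
    have : (1 : ℝ) ≤ (28 : ℝ) ^ n := one_le_pow₀ (by norm_num)
    nlinarith
  refine ⟨max 1 (c₁ ^ (n + 1) * n), le_max_left _ _, fun X hX => ?_⟩
  set N : ℕ := ⌈X⌉₊ with hNdef
  have hN1 : 1 ≤ N := Nat.one_le_ceil_iff.mpr (by linarith)
  have hNle : (N : ℝ) ≤ 2 * X := by
    have := Nat.ceil_lt_add_one (by linarith : (0:ℝ) ≤ X)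
    rw [hNdef]; linarith
  have hsub : {K ∈ 𝓕 | (absDisc K : ℝ) ≤ X} ⊆ {K ∈ 𝓕 | absDisc K ≤ N} := by
    intro K hK
    refine ⟨hK.1, ?_⟩
    have : (absDisc K : ℝ) ≤ (N : ℝ) := hK.2.trans (Nat.le_ceil X)
    exact_mod_cast this
  obtain ⟨hfinN, hcardN⟩ := count_le n N hn 𝓕 h𝓕
  refine ⟨hfinN.subset hsub, ?_⟩
  have hcard : {K ∈ 𝓕 | (absDisc K : ℝ) ≤ X}.ncard ≤ (rootT n N).card :=
    (Set.ncard_le_ncard hsub hfinN).trans hcardN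
  -- real-number chain
  set C : ℤ := coefBd n N with hCdef
  have hC1 : 1 ≤ C := one_le_coefBd n N
  have hIcc : ((Finset.Icc (-C) C).card : ℝ) = 2 * (C : ℝ) + 1 := by
    have h : (((2 * C + 1).toNat : ℤ) : ℝ) = ((2 * C + 1 : ℤ) : ℝ) := by
      exact_mod_cast congrArg (fun z : ℤ => (z : ℝ)) (Int.toNat_of_nonneg (show (0:ℤ) ≤ 2 * C + 1 by omega))
    calc ((Finset.Icc (-C) C).card : ℝ) = (((2 * C + 1).toNat : ℤ) : ℝ) := by
          rw [Int.card_Icc, show C + 1 - -C = 2 * C + 1 by ring]; norm_cast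
      _ = 2 * (C : ℝ) + 1 := by rw [h]; push_cast; ring
  set B : ℝ := ((NumberField.hermiteTheorem.boundOfDiscBdd N : NNReal) : ℝ) with hBdef
  have hB0 : 0 ≤ B := (NumberField.hermiteTheorem.boundOfDiscBdd N).2
  have hBle : B ≤ 6 * (N : ℝ) ^ 2 := boundOfDiscBdd_le N hN1
  have hX0 : (0 : ℝ) < X := by linarith
  have hXpow : ∀ m : ℕ, (1 : ℝ) ≤ X ^ m := fun m => one_le_pow₀ hX
  have hB1le : B + 1 ≤ 28 * X ^ 2 := by
    have : (N : ℝ) ^ 2 ≤ (2 * X) ^ 2 := by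
      have h0 : (0 : ℝ) ≤ (N : ℝ) := Nat.cast_nonneg N
      nlinarith
    nlinarith [hXpow 2]
  have hCle : (C : ℝ) ≤ (B + 1) ^ n * ch + 1 := by
    rw [hCdef, coefBd]
    exact_mod_cast (Int.ceil_lt_add_one _).le
  have hpow : (B + 1) ^ n ≤ (28 : ℝ) ^ n * X ^ (2 * n) := by
    calc (B + 1) ^ n ≤ (28 * X ^ 2) ^ n := pow_le_pow_left₀ (by linarith) hB1le n
      _ = 28 ^ n * X ^ (2 * n) := by rw [mul_pow, ← pow_mul]
  have h2C : 2 * (C : ℝ) + 1 ≤ c₁ * X ^ (2 * n) := by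
    have h1 : (1 : ℝ) ≤ (B + 1) ^ n * ch := by nlinarith [one_le_pow₀ (by linarith : (1:ℝ) ≤ B + 1) (n := n)]
    have : 2 * (C : ℝ) + 1 ≤ 3 * ((B + 1) ^ n * ch + 1) := by nlinarith
    calc 2 * (C : ℝ) + 1 ≤ 3 * ((B + 1) ^ n * ch + 1) := this
      _ ≤ 3 * ((28 : ℝ) ^ n * X ^ (2 * n) * ch + 1) := by nlinarith
      _ ≤ c₁ * X ^ (2 * n) := by
          rw [hc₁]
          have := hXpow (2 * n)
          nlinarith
  -- assemble
  have hroot : ((rootT n N).card : ℝ) ≤ (2 * (C : ℝ) + 1) ^ (n + 1) * n := by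
    have h1 := card_rootT_le n N
    have h2 := card_polyT_le n N
    have : ((rootT n N).card : ℝ) ≤ ((Finset.Icc (-C) C).card : ℝ) ^ (n + 1) * n := by
      exact_mod_cast (h1.trans (Nat.mul_le_mul_right n h2))
    rwa [hIcc] at this
  have hfinal : ((rootT n N).card : ℝ) ≤ (c₁ ^ (n + 1) * n) * X ^ (2 * n * (n + 1)) := by
    calc ((rootT n N).card : ℝ) ≤ (2 * (C : ℝ) + 1) ^ (n + 1) * n := hroot
      _ ≤ (c₁ * X ^ (2 * n)) ^ (n + 1) * n := by
          have hC0 : (1:ℝ) ≤ (C:ℝ) := by exact_mod_cast hC1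
          gcongr
          all_goals first | exact h2C | linarith
      _ = (c₁ ^ (n + 1) * n) * X ^ (2 * n * (n + 1)) := by
          rw [mul_pow, ← pow_mul]
          ring
  calc (({K ∈ 𝓕 | (absDisc K : ℝ) ≤ X}).ncard : ℝ) ≤ ((rootT n N).card : ℝ) := by
        exact_mod_cast hcard
    _ ≤ (c₁ ^ (n + 1) * n) * X ^ (2 * n * (n + 1)) := hfinal
    _ ≤ max 1 (c₁ ^ (n + 1) * n) * X ^ (2 * n * (n + 1)) := by
        gcongr
        exact le_max_right _ _

/-- If for some `α ≥ 1` and an unbounded strictly increasing sequence of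
exponents `k_j` the `k_j`-th moments of `|Cl_K[ℓ]|` over `𝓕(X)` are bounded by
`c_j · |𝓕(X)|^α`, then `|Cl_K[ℓ]| ≪_ε D_K^ε` for every field `K ∈ 𝓕`. -/
theorem moments_imply_pointwise_torsion_bound
    (n ℓ : ℕ) (hn : 2 ≤ n) (hℓ : 1 ≤ ℓ)
    (𝓕 : Set (IntermediateField ℚ (AlgebraicClosure ℚ)))
    (h𝓕 : ∀ K ∈ 𝓕, Module.finrank ℚ K = n)
    (α : ℝ) (hα : 1 ≤ α)
    (k : ℕ → ℝ) (hkmono : StrictMono k)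
    (hktop : Tendsto k atTop atTop)
    (c : ℕ → ℝ) (hc : ∀ j, 0 < c j)
    (hmom : ∀ j : ℕ, ∀ X : ℝ, 1 ≤ X →
      ∑ᶠ K ∈ {K ∈ 𝓕 | (absDisc K : ℝ) ≤ X}, (clTors K ℓ : ℝ) ^ (k j)
        ≤ c j * (({K ∈ 𝓕 | (absDisc K : ℝ) ≤ X}).ncard : ℝ) ^ α) :
    ∀ ε : ℝ, 0 < ε → ∃ cε : ℝ, 0 < cε ∧
      ∀ K ∈ 𝓕, (clTors K ℓ : ℝ) ≤ cε * (absDisc K : ℝ) ^ ε := by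
  intro ε hε
  obtain ⟨Cc, hCc1, hcount⟩ := count_poly_bound n hn 𝓕 h𝓕
  set A : ℕ := 2 * n * (n + 1) with hA
  obtain ⟨j, hj⟩ := (hktop.eventually_ge_atTop (max 1 ((A : ℝ) * α / ε))).exists
  have hkj1 : (1 : ℝ) ≤ k j := le_trans (le_max_left _ _) hj
  have hkjA : (A : ℝ) * α / ε ≤ k j := le_trans (le_max_right _ _) hj
  have hkj0 : (0 : ℝ) < k j := by linarith
  have hCc0 : (0 : ℝ) < Cc := lt_of_lt_of_le one_pos hCc1
  refine ⟨max 1 ((c j * Cc ^ α) ^ (k j)⁻¹), lt_of_lt_of_le one_pos (le_max_left _ _), ?_⟩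
  intro K hK
  have hfd : FiniteDimensional ℚ K :=
    FiniteDimensional.of_finrank_pos (by rw [h𝓕 K hK]; omega)
  have hD1 : (1 : ℝ) ≤ (absDisc K : ℝ) := by exact_mod_cast one_le_absDisc K hfd
  set D : ℝ := (absDisc K : ℝ) with hDdef
  have hD0 : (0 : ℝ) < D := lt_of_lt_of_le one_pos hD1
  obtain ⟨hfin, hcard⟩ := hcount D hD1
  have hmem : K ∈ {K' ∈ 𝓕 | (absDisc K' : ℝ) ≤ D} := ⟨hK, le_refl D⟩
  have ht0 : (0 : ℝ) ≤ (clTors K ℓ : ℝ) := Nat.cast_nonneg _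
  have hterm : (clTors K ℓ : ℝ) ^ (k j) ≤
      ∑ᶠ K' ∈ {K' ∈ 𝓕 | (absDisc K' : ℝ) ≤ D}, (clTors K' ℓ : ℝ) ^ (k j) := by
    rw [← hfin.coe_toFinset, finsum_mem_coe_finset]
    exact Finset.single_le_sum (f := fun K' => (clTors K' ℓ : ℝ) ^ (k j))
      (fun i _ => Real.rpow_nonneg (Nat.cast_nonneg _) _) (hfin.mem_toFinset.mpr hmem)
  have hmm := hmom j D hD1
  have hg : (({K' ∈ 𝓕 | (absDisc K' : ℝ) ≤ D}).ncard : ℝ) ^ α ≤ (Cc * D ^ A) ^ α :=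
    Real.rpow_le_rpow (Nat.cast_nonneg _) hcard (by linarith)
  have h1 : (clTors K ℓ : ℝ) ^ (k j) ≤ c j * (Cc * D ^ A) ^ α :=
    le_trans (hterm.trans hmm) (mul_le_mul_of_nonneg_left hg (hc j).le)
  have hrw : (Cc * D ^ A) ^ α = Cc ^ α * D ^ ((A : ℝ) * α) := by
    rw [Real.mul_rpow hCc0.le (by positivity), ← Real.rpow_natCast D A,
      ← Real.rpow_mul hD0.le]
  rw [hrw, ← mul_assoc] at h1
  have key : (clTors K ℓ : ℝ) ≤ (c j * Cc ^ α * D ^ ((A : ℝ) * α)) ^ (k j)⁻¹ := by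
    have h2 := Real.rpow_le_rpow (Real.rpow_nonneg ht0 _) h1 (inv_nonneg.mpr hkj0.le)
    rwa [Real.rpow_rpow_inv ht0 hkj0.ne'] at h2
  have hsplit : (c j * Cc ^ α * D ^ ((A : ℝ) * α)) ^ (k j)⁻¹ =
      (c j * Cc ^ α) ^ (k j)⁻¹ * D ^ ((A : ℝ) * α * (k j)⁻¹) := by
    rw [Real.mul_rpow (mul_nonneg (hc j).le (Real.rpow_nonneg hCc0.le _))
      (Real.rpow_nonneg hD0.le _), ← Real.rpow_mul hD0.le]
  have hexp : (A : ℝ) * α * (k j)⁻¹ ≤ ε := by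
    have hAα : (0 : ℝ) ≤ (A : ℝ) * α := by positivity
    have h3 : (A : ℝ) * α ≤ k j * ε := by
      have := (div_le_iff₀ hε).mp hkjA
      linarith
    rw [mul_inv_le_iff₀ hkj0]
    linarith [mul_comm (k j) ε]
  have hDexp : D ^ ((A : ℝ) * α * (k j)⁻¹) ≤ D ^ ε :=
    Real.rpow_le_rpow_of_exponent_le hD1 hexp
  calc (clTors K ℓ : ℝ) ≤ (c j * Cc ^ α * D ^ ((A : ℝ) * α)) ^ (k j)⁻¹ := key
    _ = (c j * Cc ^ α) ^ (k j)⁻¹ * D ^ ((A : ℝ) * α * (k j)⁻¹) := hsplit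
    _ ≤ max 1 ((c j * Cc ^ α) ^ (k j)⁻¹) * D ^ ε := by
        have hpos : (0 : ℝ) ≤ (c j * Cc ^ α) ^ (k j)⁻¹ :=
          Real.rpow_nonneg (mul_nonneg (hc j).le (Real.rpow_nonneg hCc0.le _)) _
        refine mul_le_mul (le_max_right _ _) hDexp (Real.rpow_nonneg hD0.le _) ?_
        exact le_trans zero_le_one (le_max_left _ _)
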